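/- arXiv:1902.00179 — 3 statements merged into one kernel-verified Lean document; each statement's English description precedes it below -/
import Mathlib

section
/- Let 0 ≤ β₂ < 1, ε > 0, ε₁ ≥ 0, N ≥ 0, and let g ∈ ℝ. Let v̂_t, v̂_{t−1} ≥ 0 be real numbers satisfying v̂_t ≥ (1−β₂) g² and |v̂_t − β₂ v̂_{t−1}| ≤ (1−β₂)(g² + ε₁ N). Then |g| · | 1/(√(v̂_t) + ε) − 1/(√(β₂ v̂_{t−1}) + ε) | ≤ √(1−β₂) (g² + ε₁ N) / ( (√(β₂ v̂_{t−1}) + ε) · ε ). -/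
set_option maxHeartbeats 800000


/-- Bound on the term T₁ in the proof of the main theorem: the difference between
the stochastic gradient coordinate divided by the current and previous sketched
adaptive denominators. -/
theorem countMinSketch_T1_bound (β₂ ε ε₁ N g vt vprev : ℝ)
    (hβ₂0 : 0 ≤ β₂) (hβ₂1 : β₂ < 1) (hε : 0 < ε) (hε₁ : 0 ≤ ε₁) (hN : 0 ≤ N)
    (hvt0 : 0 ≤ vt) (hvprev0 : 0 ≤ vprev)
    (hvtg : (1 - β₂) * g ^ 2 ≤ vt)
    (hdiff : |vt - β₂ * vprev| ≤ (1 - β₂) * (g ^ 2 + ε₁ * N)) :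
    |g| * |1 / (Real.sqrt vt + ε) - 1 / (Real.sqrt (β₂ * vprev) + ε)| ≤
      Real.sqrt (1 - β₂) * (g ^ 2 + ε₁ * N) / ((Real.sqrt (β₂ * vprev) + ε) * ε) := by
  set a := Real.sqrt vt with ha
  set b := Real.sqrt (β₂ * vprev) with hb
  set s := Real.sqrt (1 - β₂) with hs
  have hβ : (0:ℝ) < 1 - β₂ := by linarith
  have ha0 : 0 ≤ a := Real.sqrt_nonneg _
  have hb0 : 0 ≤ b := Real.sqrt_nonneg _
  have hs0 : 0 < s := Real.sqrt_pos.mpr hβ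
  have hs2 : s ^ 2 = 1 - β₂ := Real.sq_sqrt hβ.le
  have hnum0 : 0 ≤ g ^ 2 + ε₁ * N := by positivity
  rcases eq_or_ne g 0 with hg | hg
  · simp [hg]
    positivity
  · have hg2 : 0 < g ^ 2 := by positivity
    have hvt : 0 < vt := lt_of_lt_of_le (by nlinarith) hvtg
    have hapos : 0 < a := Real.sqrt_pos.mpr hvt
    have ha2 : a ^ 2 = vt := Real.sq_sqrt hvt.le
    have hb2 : b ^ 2 = β₂ * vprev := Real.sq_sqrt (by positivity)
    have haε : 0 < a + ε := by linarith
    have hbε : 0 < b + ε := by linarith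
    have hdiffeq : 1 / (a + ε) - 1 / (b + ε) = (b - a) / ((a + ε) * (b + ε)) := by
      field_simp
      ring
    -- |b - a| * (a + b) = |β₂ vprev - vt|
    have key : |b - a| * (a + b) = |β₂ * vprev - vt| := by
      have h : (b - a) * (a + b) = β₂ * vprev - vt := by nlinarith [ha2, hb2]
      rw [← abs_of_nonneg (by linarith : (0:ℝ) ≤ a + b), ← abs_mul, h]
    have habs : |β₂ * vprev - vt| = |vt - β₂ * vprev| := abs_sub_comm _ _
    -- |g| ≤ a / s, i.e. |g| * s ≤ a
    have hgs : |g| * s ≤ a := by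
      have : Real.sqrt ((1 - β₂) * g ^ 2) ≤ a := Real.sqrt_le_sqrt hvtg
      rwa [Real.sqrt_mul hβ.le, Real.sqrt_sq_eq_abs, mul_comm] at this
    -- main numerator bound : |g| * |b - a| ≤ s * (g^2 + ε₁ * N)
    have hnum : |g| * |b - a| ≤ s * (g ^ 2 + ε₁ * N) := by
      have h1 : |b - a| * a ≤ (1 - β₂) * (g ^ 2 + ε₁ * N) := by
        have := key
        rw [habs] at this
        nlinarith [abs_nonneg (b - a), this, hdiff]
      -- multiply : |g| * |b - a| * a ≤ |g| * (1-β₂)*(...) ≤ (a/s)*(1-β₂)*(...)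
      have h2 : |g| * (|b - a| * a) ≤ |g| * ((1 - β₂) * (g ^ 2 + ε₁ * N)) :=
        mul_le_mul_of_nonneg_left h1 (abs_nonneg g)
      have h3 : |g| * ((1 - β₂) * (g ^ 2 + ε₁ * N)) ≤ (a / s) * ((1 - β₂) * (g ^ 2 + ε₁ * N)) := by
        have : |g| ≤ a / s := (le_div_iff₀ hs0).mpr hgs
        exact mul_le_mul_of_nonneg_right this (by positivity)
      have h4 : (a / s) * ((1 - β₂) * (g ^ 2 + ε₁ * N)) = a * (s * (g ^ 2 + ε₁ * N)) := by
        rw [← hs2]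
        field_simp
      have h5 : |g| * |b - a| * a ≤ s * (g ^ 2 + ε₁ * N) * a := by
        calc |g| * |b - a| * a = |g| * (|b - a| * a) := by ring
          _ ≤ (a / s) * ((1 - β₂) * (g ^ 2 + ε₁ * N)) := le_trans h2 h3
          _ = s * (g ^ 2 + ε₁ * N) * a := by rw [h4]; ring
      exact le_of_mul_le_mul_right h5 hapos
    rw [hdiffeq, abs_div, abs_of_pos (by positivity : (0:ℝ) < (a + ε) * (b + ε)),
      ← mul_div_assoc]
    apply div_le_div₀ (by positivity) _ (by positivity)
    · nlinarith
    · exact hnum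
end

section
/- Let x ∈ ℝ^d, let w ≥ 1, and let h : {1,…,d} → {1,…,w} and s : {1,…,d} → {−1, +1} be random functions such that the 2d values h(1),…,h(d), s(1),…,s(d) are mutually independent, each h(k) uniform on {1,…,w} and each s(k) uniform on {−1,+1}. Define est(i) = s(i) · Σ_{k : h(k) = h(i)} s(k) x_k. Then E[(est(i) − x_i)²] = (1/w) Σ_{k ≠ i} x_k² ≤ ‖x‖₂² / w, where ‖x‖₂² = Σ_k x_k². -/
open MeasureTheory ProbabilityTheory Finset

/-- The family consisting of the `d` hash values followed by the `d` sign values,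
indexed by `Fin d ⊕ Fin d`. -/
def hashSignFamily {Ω : Type*} {d w : ℕ} (H : Fin d → Ω → Fin w) (s : Fin d → Ω → ℝ) :
    (i : Fin d ⊕ Fin d) → Ω → Sum.elim (fun _ : Fin d => Fin w) (fun _ : Fin d => ℝ) i
  | Sum.inl k => H k
  | Sum.inr k => s k

/-- The measurable-space structure on the codomains of `hashSignFamily`. -/
def hashSignMS {d w : ℕ} :
    (i : Fin d ⊕ Fin d) →
      MeasurableSpace (Sum.elim (fun _ : Fin d => Fin w) (fun _ : Fin d => ℝ) i)
  | Sum.inl _ => (inferInstance : MeasurableSpace (Fin w))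
  | Sum.inr _ => (inferInstance : MeasurableSpace ℝ)


/-- The variance of the Count-Sketch row estimator of coordinate `i` equals the
squared ℓ₂ mass of the other coordinates divided by the width `w`. -/
theorem countSketch_variance {d w : ℕ} (hd : 0 < d) (hw : 0 < w)
    {Ω : Type*} [MeasurableSpace Ω] (P : Measure Ω) [IsProbabilityMeasure P]
    (x : Fin d → ℝ)
    (H : Fin d → Ω → Fin w) (hHmeas : ∀ k, Measurable (H k))
    (s : Fin d → Ω → ℝ) (hsmeas : ∀ k, Measurable (s k))
    (hsval : ∀ k ω, s k ω = 1 ∨ s k ω = -1)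
    (hindep : iIndepFun (m := hashSignMS) (hashSignFamily H s) P)
    (hHunif : ∀ k (c : Fin w), P {ω | H k ω = c} = (w : ENNReal)⁻¹)
    (hsunif : ∀ k, P {ω | s k ω = 1} = (2 : ENNReal)⁻¹)
    (est : Fin d → Ω → ℝ)
    (hest : ∀ i ω, est i ω =
      s i ω * ∑ k ∈ Finset.univ.filter (fun k => H k ω = H i ω), s k ω * x k)
    (i : Fin d) :
    ∫ ω, (est i ω - x i) ^ 2 ∂P = (1 / w) * ∑ k ∈ Finset.univ.erase i, (x k) ^ 2 ∧
      (1 / w) * ∑ k ∈ Finset.univ.erase i, (x k) ^ 2 ≤ (∑ k, (x k) ^ 2) / w := by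
  classical
  have hwE : (w : ENNReal) ≠ 0 := by exact_mod_cast hw.ne'
  have hwT : (w : ENNReal) ≠ ⊤ := ENNReal.natCast_ne_top w
  set g : Fin d → Ω → ℝ :=
    fun k ω => if H k ω = H i ω then s i ω * s k ω * x k else 0 with hg
  set E : Finset (Fin d) := Finset.univ.erase i with hE
  -- measurability of the sign-level events
  have hsev : ∀ (m : Fin d) (a : ℝ), MeasurableSet {ω | s m ω = a} := by
    intro m a
    have : {ω | s m ω = a} = s m ⁻¹' {a} := by ext ω; simp
    rw [this]; exact hsmeas m (measurableSet_singleton a)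
  have hHev : ∀ (m : Fin d) (c : Fin w), MeasurableSet {ω | H m ω = c} := by
    intro m c
    have : {ω | H m ω = c} = H m ⁻¹' {c} := by ext ω; simp
    rw [this]; exact hHmeas m (measurableSet_singleton c)
  have hAset : ∀ k : Fin d, MeasurableSet {ω | H k ω = H i ω} := by
    intro k
    have : {ω | H k ω = H i ω} = ⋃ c : Fin w, ({ω | H k ω = c} ∩ {ω | H i ω = c}) := by
      ext ω; simp [eq_comm]
    rw [this]
    exact MeasurableSet.iUnion fun c => (hHev k c).inter (hHev i c)
  have hgm : ∀ k, Measurable (g k) := by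
    intro k
    rw [hg]
    exact Measurable.ite (hAset k) (((hsmeas i).mul (hsmeas k)).mul_const _) measurable_const
  have hgb : ∀ k ω, |g k ω| ≤ |x k| := by
    intro k ω
    by_cases h : H k ω = H i ω
    · rcases hsval i ω with h1 | h1 <;> rcases hsval k ω with h2 | h2 <;>
        simp [hg, h, h1, h2]
    · simp [hg, h, abs_nonneg]
  have hint : ∀ k l : Fin d, Integrable (fun ω => g k ω * g l ω) P := by
    intro k l
    refine Integrable.mono' (integrable_const (|x k| * |x l|))
      ((hgm k).mul (hgm l)).aestronglyMeasurable (ae_of_all _ fun ω => ?_)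
    rw [Real.norm_eq_abs, abs_mul]
    exact mul_le_mul (hgb k ω) (hgb l ω) (abs_nonneg _) (abs_nonneg _)
  -- decomposition of the estimator error
  have hsum : ∀ ω, est i ω - x i = ∑ k ∈ E, g k ω := by
    intro ω
    have hi : i ∈ Finset.univ.filter (fun k => H k ω = H i ω) := by simp
    have key : ∑ k ∈ (Finset.univ.filter (fun k => H k ω = H i ω)).erase i,
        s i ω * (s k ω * x k) = ∑ k ∈ E, g k ω := by
      rw [hE, ← Finset.filter_erase, Finset.sum_filter]
      refine Finset.sum_congr rfl fun k _ => ?_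
      simp only [hg, mul_assoc]
    rw [hest i ω, ← Finset.add_sum_erase _ _ hi, mul_add, Finset.mul_sum]
    simp only [key]
    have hsi : s i ω * (s i ω * x i) = x i := by
      rcases hsval i ω with h | h <;> rw [h] <;> ring
    rw [hsi]; ring
  -- probability that two distinct hashes collide
  have hP2 : ∀ k : Fin d, k ≠ i → P {ω | H k ω = H i ω} = (w : ENNReal)⁻¹ := by
    intro k hk
    have hpairc : ∀ c : Fin w,
        P ({ω | H k ω = c} ∩ {ω | H i ω = c}) = (w : ENNReal)⁻¹ * (w : ENNReal)⁻¹ := by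
      intro c
      have hpair : IndepFun (H k) (H i) P :=
        hindep.indepFun (by simpa using hk : (Sum.inl k : Fin d ⊕ Fin d) ≠ Sum.inl i)
      have h2 := hpair.measure_inter_preimage_eq_mul {c} {c} (measurableSet_singleton c)
        (measurableSet_singleton c)
      have e1 : H k ⁻¹' {c} = {ω | H k ω = c} := by ext ω; simp
      have e2 : H i ⁻¹' {c} = {ω | H i ω = c} := by ext ω; simp
      rw [e1, e2] at h2
      rw [h2, hHunif, hHunif]
    have hU : {ω | H k ω = H i ω} = ⋃ c : Fin w, ({ω | H k ω = c} ∩ {ω | H i ω = c}) := by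
      ext ω; simp [eq_comm]
    have hdisj : Pairwise (Function.onFun Disjoint
        (fun c : Fin w => ({ω | H k ω = c} ∩ {ω | H i ω = c}))) := by
      intro c c' hcc
      rw [Function.onFun, Set.disjoint_left]
      rintro ω ⟨h1, h2⟩ ⟨h1', h2'⟩
      exact hcc (h1.symm.trans h1')
    rw [hU, measure_iUnion hdisj (fun c => (hHev k c).inter (hHev i c)), tsum_fintype]
    rw [Finset.sum_congr rfl (fun c _ => hpairc c), Finset.sum_const, Finset.card_univ,
      Fintype.card_fin, nsmul_eq_mul, ← mul_assoc, ENNReal.mul_inv_cancel hwE hwT, one_mul]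
  -- diagonal terms
  have hdiag : ∀ k ∈ E, ∫ ω, g k ω * g k ω ∂P = (1 / (w : ℝ)) * x k ^ 2 := by
    intro k hk
    have hki : k ≠ i := Finset.ne_of_mem_erase hk
    have hpt : ∀ ω, g k ω * g k ω
        = Set.indicator {ω | H k ω = H i ω} (fun _ => x k ^ 2) ω := by
      intro ω
      by_cases h : H k ω = H i ω
      · rcases hsval i ω with h1 | h1 <;> rcases hsval k ω with h2 | h2 <;>
          simp [hg, h, h1, h2, Set.indicator_of_mem, Set.mem_setOf_eq] <;> ring
      · simp [hg, h, Set.indicator_of_notMem]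
    rw [integral_congr_ae (ae_of_all _ hpt), integral_indicator_const _ (hAset k),
      measureReal_def, hP2 k hki]
    rw [smul_eq_mul]
    congr 1
    simp [ENNReal.toReal_inv]
  -- sign probabilities
  have hs2 : ∀ (m : Fin d) (a : ℝ), a = 1 ∨ a = -1 → P {ω | s m ω = a} = (2 : ENNReal)⁻¹ := by
    intro m a ha
    rcases ha with rfl | rfl
    · exact hsunif m
    · have hc : {ω | s m ω = -1} = {ω | s m ω = 1}ᶜ := by
        ext ω; rcases hsval m ω with h | h <;> simp [h] <;> norm_num
      rw [hc, measure_compl (hsev m 1) (measure_ne_top P _), measure_univ, hsunif]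
      exact ENNReal.sub_eq_of_eq_add (by norm_num) ENNReal.inv_two_add_inv_two.symm
  -- off-diagonal terms vanish
  have hoff : ∀ k ∈ E, ∀ l ∈ E, k ≠ l → ∫ ω, g k ω * g l ω ∂P = 0 := by
    intro k hk l hl hkl
    have hki : k ≠ i := Finset.ne_of_mem_erase hk
    have hli : l ≠ i := Finset.ne_of_mem_erase hl
    set A : Set Ω := {ω | H k ω = H i ω} ∩ {ω | H l ω = H i ω} with hA
    have hAm : MeasurableSet A := (hAset k).inter (hAset l)
    set T : ℝ → ℝ → Set Ω := fun a b => A ∩ {ω | s k ω = a} ∩ {ω | s l ω = b} with hT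
    have hTm : ∀ a b, MeasurableSet (T a b) :=
      fun a b => (hAm.inter (hsev k a)).inter (hsev l b)
    -- probability of each piece
    have hW5 : ∀ (c : Fin w) (a b : ℝ), a = 1 ∨ a = -1 → b = 1 ∨ b = -1 →
        P {ω | H k ω = c ∧ H l ω = c ∧ H i ω = c ∧ s k ω = a ∧ s l ω = b}
          = (w : ENNReal)⁻¹ * (w : ENNReal)⁻¹ * (w : ENNReal)⁻¹ * ((2 : ENNReal)⁻¹ * 2⁻¹) := by
      intro c a b ha hb
      set S : Finset (Fin d ⊕ Fin d) := {Sum.inl k, Sum.inl l, Sum.inl i, Sum.inr k, Sum.inr l}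
        with hS
      set T5 : ∀ j : Fin d ⊕ Fin d, Set (Sum.elim (fun _ : Fin d => Fin w) (fun _ : Fin d => ℝ) j) :=
        fun j => match j with
          | Sum.inl _ => ({c} : Set (Fin w))
          | Sum.inr m => if m = k then ({a} : Set ℝ) else ({b} : Set ℝ) with hT5
      have hmeas : ∀ j ∈ S, MeasurableSet[hashSignMS j] (T5 j) := by
        intro j _
        match j with
        | Sum.inl m =>
          show MeasurableSet[(inferInstance : MeasurableSpace (Fin w))] ({c} : Set (Fin w))
          exact measurableSet_singleton _
        | Sum.inr m =>
          show MeasurableSet[(inferInstance : MeasurableSpace ℝ)]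
            (if m = k then ({a} : Set ℝ) else {b})
          split <;> exact measurableSet_singleton _
      have key := hindep.measure_inter_preimage_eq_mul (S := S) (sets := T5) hmeas
      have hset : (⋂ j ∈ S, hashSignFamily H s j ⁻¹' T5 j)
          = {ω | H k ω = c ∧ H l ω = c ∧ H i ω = c ∧ s k ω = a ∧ s l ω = b} := by
        ext ω
        simp only [hS, hT5, Finset.mem_insert, Finset.mem_singleton, Set.mem_iInter,
          Set.mem_preimage, Set.mem_setOf_eq]
        constructor
        · intro h
          have h1 := h _ (Or.inl rfl)
          have h2 := h _ (Or.inr (Or.inl rfl))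
          have h3 := h _ (Or.inr (Or.inr (Or.inl rfl)))
          have h4 := h _ (Or.inr (Or.inr (Or.inr (Or.inl rfl))))
          have h5 := h _ (Or.inr (Or.inr (Or.inr (Or.inr rfl))))
          simp only [hashSignFamily] at h1 h2 h3 h4 h5
          change H k ω = c at h1; change H l ω = c at h2; change H i ω = c at h3
          simp at h4
          change s l ω ∈ (if l = k then ({a} : Set ℝ) else {b}) at h5
          rw [if_neg (fun h => hkl (h.symm))] at h5
          simp only [Set.mem_singleton_iff] at h5
          exact ⟨h1, h2, h3, h4, h5⟩
        · rintro ⟨h1, h2, h3, h4, h5⟩ j hj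
          rcases hj with rfl | rfl | rfl | rfl | rfl
          · simp [hashSignFamily]; exact h1
          · simp [hashSignFamily]; exact h2
          · simp [hashSignFamily]; exact h3
          · simp [hashSignFamily, h4]; exact rfl
          · simp [hashSignFamily, Ne.symm hkl, h5]; exact rfl
      have hprod : (∏ j ∈ S, P (hashSignFamily H s j ⁻¹' T5 j))
          = (w : ENNReal)⁻¹ * (w : ENNReal)⁻¹ * (w : ENNReal)⁻¹ * ((2 : ENNReal)⁻¹ * 2⁻¹) := by
        have d1 : (Sum.inl k : Fin d ⊕ Fin d)
            ∉ ({Sum.inl l, Sum.inl i, Sum.inr k, Sum.inr l} : Finset _) := by simp [hkl, hki]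
        have d2 : (Sum.inl l : Fin d ⊕ Fin d)
            ∉ ({Sum.inl i, Sum.inr k, Sum.inr l} : Finset _) := by simp [hli]
        have d3 : (Sum.inl i : Fin d ⊕ Fin d) ∉ ({Sum.inr k, Sum.inr l} : Finset _) := by simp
        have d4 : (Sum.inr k : Fin d ⊕ Fin d) ∉ ({Sum.inr l} : Finset _) := by simp [hkl]
        rw [show S = insert (Sum.inl k) {Sum.inl l, Sum.inl i, Sum.inr k, Sum.inr l} from rfl,
          Finset.prod_insert d1, Finset.prod_insert d2, Finset.prod_insert d3,
          Finset.prod_insert d4, Finset.prod_singleton]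
        have e1 : ∀ m : Fin d,
            hashSignFamily H s (Sum.inl m) ⁻¹' T5 (Sum.inl m) = {ω | H m ω = c} := by
          intro m; ext ω; simp [hashSignFamily, hT5]
        have e4 : hashSignFamily H s (Sum.inr k) ⁻¹' T5 (Sum.inr k) = {ω | s k ω = a} := by
          ext ω; simp [hashSignFamily, hT5]
        have e5 : hashSignFamily H s (Sum.inr l) ⁻¹' T5 (Sum.inr l) = {ω | s l ω = b} := by
          ext ω; simp [hashSignFamily, hT5, Ne.symm hkl]
        rw [e1, e1, e1, e4, e5, hHunif, hHunif, hHunif, hs2 k a ha, hs2 l b hb]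
        ring
      rw [← hset, key, hprod]
    have hPT : ∀ a b : ℝ, a = 1 ∨ a = -1 → b = 1 ∨ b = -1 →
        P (T a b) = (w : ENNReal) *
          ((w : ENNReal)⁻¹ * (w : ENNReal)⁻¹ * (w : ENNReal)⁻¹ * ((2 : ENNReal)⁻¹ * 2⁻¹)) := by
      intro a b ha hb
      have hUT : T a b = ⋃ c : Fin w,
          {ω | H k ω = c ∧ H l ω = c ∧ H i ω = c ∧ s k ω = a ∧ s l ω = b} := by
        ext ω
        simp only [hT, hA, Set.mem_iUnion, Set.mem_inter_iff, Set.mem_setOf_eq]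
        constructor
        · rintro ⟨⟨⟨h1, h2⟩, h3⟩, h4⟩
          exact ⟨H i ω, h1, h2, rfl, h3, h4⟩
        · rintro ⟨c, h1, h2, h3, h4, h5⟩
          exact ⟨⟨⟨h1.trans h3.symm, h2.trans h3.symm⟩, h4⟩, h5⟩
      have hWm : ∀ c : Fin w, MeasurableSet
          {ω | H k ω = c ∧ H l ω = c ∧ H i ω = c ∧ s k ω = a ∧ s l ω = b} := by
        intro c
        have : {ω | H k ω = c ∧ H l ω = c ∧ H i ω = c ∧ s k ω = a ∧ s l ω = b}
            = {ω | H k ω = c} ∩ ({ω | H l ω = c} ∩ ({ω | H i ω = c}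
              ∩ ({ω | s k ω = a} ∩ {ω | s l ω = b}))) := by
          ext ω; simp [Set.mem_inter_iff, and_assoc]
        rw [this]
        exact (hHev k c).inter ((hHev l c).inter ((hHev i c).inter
          ((hsev k a).inter (hsev l b))))
      have hdisj : Pairwise (Function.onFun Disjoint (fun c : Fin w =>
          {ω | H k ω = c ∧ H l ω = c ∧ H i ω = c ∧ s k ω = a ∧ s l ω = b})) := by
        intro c c' hcc
        rw [Function.onFun, Set.disjoint_left]
        rintro ω ⟨h1, -⟩ ⟨h1', -⟩
        exact hcc (h1.symm.trans h1')
      rw [hUT, measure_iUnion hdisj hWm, tsum_fintype,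
        Finset.sum_congr rfl (fun c _ => hW5 c a b ha hb), Finset.sum_const,
        Finset.card_univ, Fintype.card_fin, nsmul_eq_mul]
    -- pointwise decomposition of the product
    have hptw : ∀ ω, g k ω * g l ω = ∑ a ∈ ({1, -1} : Finset ℝ),
        ∑ b ∈ ({1, -1} : Finset ℝ),
          Set.indicator (T a b) (fun _ => a * b * (x k * x l)) ω := by
      intro ω
      have hsum2 : ∀ f : ℝ → ℝ, ∑ a ∈ ({1, -1} : Finset ℝ), f a = f 1 + f (-1) :=
        fun f => Finset.sum_pair (by norm_num)
      rw [hsum2, hsum2, hsum2]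
      by_cases hc1 : H k ω = H i ω
      · by_cases hc2 : H l ω = H i ω
        · rcases hsval i ω with h0 | h0 <;> rcases hsval k ω with ha | ha <;>
            rcases hsval l ω with hb | hb <;>
            simp [hg, hc1, hc2, h0, ha, hb, Set.indicator_apply, hT, hA,
              Set.mem_inter_iff, Set.mem_setOf_eq] <;> norm_num <;> ring
        · simp [hg, hc2, Set.indicator_apply, hT, hA, Set.mem_inter_iff, Set.mem_setOf_eq]
      · simp [hg, hc1, Set.indicator_apply, hT, hA, Set.mem_inter_iff, Set.mem_setOf_eq]
    -- integrate
    rw [integral_congr_ae (ae_of_all _ hptw)]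
    rw [integral_finset_sum _ (fun a _ => integrable_finset_sum _ (fun b _ =>
      (integrable_const _).indicator (hTm a b)))]
    rw [Finset.sum_congr rfl (fun a _ => integral_finset_sum _ (fun b _ =>
      (integrable_const _).indicator (hTm a b)))]
    rw [Finset.sum_congr rfl (fun a ha => Finset.sum_congr rfl (fun b hb => by
      rw [integral_indicator_const _ (hTm a b), measureReal_def,
        hPT a b (by simpa using ha) (by simpa using hb)]))]
    have hsum2 : ∀ f : ℝ → ℝ, ∑ a ∈ ({1, -1} : Finset ℝ), f a = f 1 + f (-1) :=
      fun f => Finset.sum_pair (by norm_num)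
    rw [hsum2, hsum2, hsum2]
    simp only [smul_eq_mul]
    ring
  -- main computation
  have main : ∫ ω, (est i ω - x i) ^ 2 ∂P = (1 / (w : ℝ)) * ∑ k ∈ E, x k ^ 2 := by
    have expand : ∫ ω, (est i ω - x i) ^ 2 ∂P
        = ∫ ω, ∑ k ∈ E, ∑ l ∈ E, g k ω * g l ω ∂P := by
      refine integral_congr_ae (ae_of_all _ fun ω => ?_)
      show (est i ω - x i) ^ 2 = ∑ k ∈ E, ∑ l ∈ E, g k ω * g l ω
      rw [hsum ω, pow_two, Finset.sum_mul_sum]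
    rw [expand,
      integral_finset_sum _ (fun k _ => integrable_finset_sum _ fun l _ => hint k l),
      Finset.sum_congr rfl (fun k _ => integral_finset_sum _ fun l _ => hint k l)]
    rw [Finset.sum_congr rfl (fun k hk => Finset.sum_eq_single_of_mem k hk
      (fun l hl hlk => hoff k hk l hl (Ne.symm hlk)))]
    rw [Finset.sum_congr rfl (fun k hk => hdiag k hk), ← Finset.mul_sum]
  refine ⟨main, ?_⟩
  have h1 : ∑ k ∈ E, x k ^ 2 ≤ ∑ k, x k ^ 2 :=
    Finset.sum_le_sum_of_subset_of_nonneg (Finset.erase_subset _ _)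
      (fun j _ _ => sq_nonneg _)
  calc (1 / (w : ℝ)) * ∑ k ∈ E, x k ^ 2
      ≤ (1 / (w : ℝ)) * ∑ k, x k ^ 2 :=
        mul_le_mul_of_nonneg_left h1 (by positivity)
    _ = (∑ k, x k ^ 2) / w := by ring
end

section
/- Let x ∈ ℝ^d with x ≠ 0, let w ≥ 1 and ε₁ > 0, and let h : {1,…,d} → {1,…,w} and s : {1,…,d} → {−1, +1} be random functions such that the 2d values h(1),…,h(d), s(1),…,s(d) are mutually independent, each h(k) uniform on {1,…,w} and each s(k) uniform on {−1,+1}. Define est(i) = s(i) · Σ_{k : h(k) = h(i)} s(k) x_k. Then for every coordinate i, P[ |est(i) − x_i| ≥ ε₁ ‖x‖₂ ] ≤ 1/(ε₁² w), where ‖x‖₂ = (Σ_k x_k²)^{1/2}. -/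
open MeasureTheory ProbabilityTheory Finset

/-- Component getter for hash coordinates of a tuple indexed by a finite index set. -/
def hsGetW {d w : ℕ} {T : Finset (Fin d ⊕ Fin d)} (k : Fin d) (h : Sum.inl k ∈ T)
    (v : (j : T) → Sum.elim (fun _ : Fin d => Fin w) (fun _ : Fin d => ℝ) (j : Fin d ⊕ Fin d)) :
    Fin w := v ⟨Sum.inl k, h⟩

/-- Component getter for sign coordinates of a tuple indexed by a finite index set. -/
def hsGetR {d w : ℕ} {T : Finset (Fin d ⊕ Fin d)} (k : Fin d) (h : Sum.inr k ∈ T)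
    (v : (j : T) → Sum.elim (fun _ : Fin d => Fin w) (fun _ : Fin d => ℝ) (j : Fin d ⊕ Fin d)) :
    ℝ := v ⟨Sum.inr k, h⟩

/-- Chebyshev concentration for a Count-Sketch row estimator: the estimate deviates
from `x_i` by at least `ε₁‖x‖₂` with probability at most `1/(ε₁² w)`. -/
theorem countSketch_concentration {d w : ℕ} (hd : 0 < d) (hw : 0 < w)
    {Ω : Type*} [MeasurableSpace Ω] (P : Measure Ω) [IsProbabilityMeasure P]
    (x : Fin d → ℝ) (hx0 : x ≠ 0)
    (ε₁ : ℝ) (hε₁ : 0 < ε₁)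
    (H : Fin d → Ω → Fin w) (hHmeas : ∀ k, Measurable (H k))
    (s : Fin d → Ω → ℝ) (hsmeas : ∀ k, Measurable (s k))
    (hsval : ∀ k ω, s k ω = 1 ∨ s k ω = -1)
    (hindep : iIndepFun (m := hashSignMS) (hashSignFamily H s) P)
    (hHunif : ∀ k (c : Fin w), P {ω | H k ω = c} = (w : ENNReal)⁻¹)
    (hsunif : ∀ k, P {ω | s k ω = 1} = (2 : ENNReal)⁻¹)
    (est : Fin d → Ω → ℝ)
    (hest : ∀ i ω, est i ω =
      s i ω * ∑ k ∈ Finset.univ.filter (fun k => H k ω = H i ω), s k ω * x k)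
    (i : Fin d) :
    P {ω | ε₁ * Real.sqrt (∑ k, (x k) ^ 2) ≤ |est i ω - x i|} ≤
      ENNReal.ofReal (1 / (ε₁ ^ 2 * w)) := by
  classical
  letI : ∀ j : Fin d ⊕ Fin d,
      MeasurableSpace (Sum.elim (fun _ : Fin d => Fin w) (fun _ : Fin d => ℝ) j) := hashSignMS
  have hwR : (0 : ℝ) < (w : ℝ) := by exact_mod_cast hw
  set S : ℝ := ∑ k, (x k) ^ 2 with hS
  have hSpos : 0 < S := by
    obtain ⟨k, hk⟩ : ∃ k, x k ≠ 0 := by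
      by_contra h; push_neg at h; exact hx0 (funext h)
    exact Finset.sum_pos' (fun j _ => sq_nonneg _)
      ⟨k, Finset.mem_univ k, by positivity⟩
  set f : Fin d → Ω → ℝ := fun k ω => if H k ω = H i ω then s k ω * x k else 0 with hf
  set Z : Ω → ℝ := fun ω => ∑ k ∈ Finset.univ.erase i, f k ω with hZ
  have hfmeas : ∀ k, Measurable (f k) := by
    intro k
    exact Measurable.ite (measurableSet_eq_fun (hHmeas k) (hHmeas i))
      ((hsmeas k).mul_const _) measurable_const
  have hZmeas : Measurable Z := Finset.measurable_sum _ (fun k _ => hfmeas k)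
  have hs1 : ∀ k ω, |s k ω| = 1 := by
    intro k ω; rcases hsval k ω with h | h <;> simp [h]
  have hssq : ∀ k ω, s k ω * s k ω = 1 := by
    intro k ω; rcases hsval k ω with h | h <;> simp [h]
  have hfb : ∀ k ω, |f k ω| ≤ |x k| := by
    intro k ω
    by_cases h : H k ω = H i ω
    · simp [hf, h, abs_mul, hs1, le_refl]
    · simp [hf, h, abs_nonneg]
  have hint : ∀ (g : Ω → ℝ) (C : ℝ), Measurable g → (∀ ω, |g ω| ≤ C) →
      Integrable g P := by
    intro g C hg hb
    exact (integrable_const C).mono' hg.aestronglyMeasurable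
      (Filter.Eventually.of_forall (by simpa using hb))
  have hFam_meas : ∀ j, Measurable (hashSignFamily H s j) := by
    intro j; cases j with
    | inl k => exact hHmeas k
    | inr k => exact hsmeas k
  -- mean of a sign is zero
  have hEs : ∀ k, ∫ ω, s k ω ∂P = 0 := by
    intro k
    set A : Set Ω := {ω | s k ω = 1} with hA
    have hAm : MeasurableSet A := hsmeas k (measurableSet_singleton 1)
    have hpt : ∀ ω, s k ω = 2 * A.indicator (fun _ => (1 : ℝ)) ω - 1 := by
      intro ω
      rcases hsval k ω with h | h
      · have hm : ω ∈ A := h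
        rw [Set.indicator_of_mem hm, h]; norm_num
      · have hm : ω ∉ A := by simp only [hA, Set.mem_setOf_eq, h]; norm_num
        rw [Set.indicator_of_notMem hm, h]; norm_num
    have hPA : (P A).toReal = 1 / 2 := by
      rw [hsunif k]; simp [ENNReal.toReal_inv]
    calc ∫ ω, s k ω ∂P = ∫ ω, (2 * A.indicator (fun _ => (1 : ℝ)) ω - 1) ∂P := by
          exact integral_congr_ae (Filter.Eventually.of_forall hpt)
      _ = 2 * ∫ ω, A.indicator (fun _ => (1 : ℝ)) ω ∂P - ∫ _, (1 : ℝ) ∂P := by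
          rw [integral_sub, integral_const_mul]
          · exact (((integrable_indicator_iff hAm).mpr
              (integrableOn_const (measure_lt_top P A).ne)).const_mul 2)
          · exact integrable_const 1
      _ = 0 := by
          rw [integral_indicator_const _ hAm, measureReal_def]
          simp [hPA]
  -- probability of a hash collision
  have hcoll : ∀ k, k ≠ i → P {ω | H k ω = H i ω} = (w : ENNReal)⁻¹ := by
    intro k hk
    have hiF : IndepFun (H k) (H i) P := by
      have := hindep.indepFun (i := Sum.inl k) (j := Sum.inl i) (by simp [hk])
      exact this
    have hdecomp : {ω | H k ω = H i ω} = ⋃ c : Fin w, (H k ⁻¹' {c} ∩ H i ⁻¹' {c}) := by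
      ext ω
      simp only [Set.mem_setOf_eq, Set.mem_iUnion, Set.mem_inter_iff, Set.mem_preimage,
        Set.mem_singleton_iff]
      constructor
      · intro h; exact ⟨H i ω, h, rfl⟩
      · rintro ⟨c, h1, h2⟩; rw [h1, h2]
    rw [hdecomp, measure_iUnion]
    · have hterm : ∀ c : Fin w, P (H k ⁻¹' {c} ∩ H i ⁻¹' {c})
          = (w : ENNReal)⁻¹ * (w : ENNReal)⁻¹ := by
        intro c
        rw [hiF.measure_inter_preimage_eq_mul _ _ (measurableSet_singleton c)
          (measurableSet_singleton c)]
        have h1 : P (H k ⁻¹' {c}) = (w : ENNReal)⁻¹ := hHunif k c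
        have h2 : P (H i ⁻¹' {c}) = (w : ENNReal)⁻¹ := hHunif i c
        rw [h1, h2]
      rw [tsum_fintype]
      simp only [hterm, Finset.sum_const, Finset.card_univ, Fintype.card_fin, nsmul_eq_mul]
      rw [← mul_assoc, ENNReal.mul_inv_cancel (by exact_mod_cast hw.ne') (by simp), one_mul]
    · intro c c' hcc
      apply Set.disjoint_left.mpr
      rintro ω ⟨h1, _⟩ ⟨h2, _⟩
      exact hcc (by rw [← h1, ← h2])
    · intro c
      exact ((hHmeas k) (measurableSet_singleton c)).inter
        ((hHmeas i) (measurableSet_singleton c))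
  -- diagonal terms
  have hdiag : ∀ k, k ≠ i → ∫ ω, f k ω * f k ω ∂P = x k ^ 2 / w := by
    intro k hk
    have hpt : ∀ ω, f k ω * f k ω
        = Set.indicator {ω | H k ω = H i ω} (fun _ => x k ^ 2) ω := by
      intro ω
      by_cases h : H k ω = H i ω
      · have hm : ω ∈ {ω | H k ω = H i ω} := h
        simp only [hf, if_pos h, Set.indicator_of_mem hm]
        linear_combination (x k ^ 2) * hssq k ω
      · have hm : ω ∉ {ω | H k ω = H i ω} := h
        simp [hf, if_neg h, Set.indicator_of_notMem hm]
    have hAm : MeasurableSet {ω | H k ω = H i ω} :=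
      measurableSet_eq_fun (hHmeas k) (hHmeas i)
    rw [integral_congr_ae (Filter.Eventually.of_forall hpt),
      integral_indicator_const _ hAm, measureReal_def, hcoll k hk]
    simp [ENNReal.toReal_inv, smul_eq_mul]
    ring
  -- off-diagonal terms vanish
  have hoff : ∀ k l, k ≠ i → l ≠ i → k ≠ l → ∫ ω, f k ω * f l ω ∂P = 0 := by
    intro k l hk hl hkl
    set g : Ω → ℝ := fun ω => (if H k ω = H i ω then x k else 0) * f l ω with hg
    have hgmeas : Measurable g := by
      exact (Measurable.ite (measurableSet_eq_fun (hHmeas k) (hHmeas i))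
        measurable_const measurable_const).mul (hfmeas l)
    have hpt : ∀ ω, f k ω * f l ω = s k ω * g ω := by
      intro ω
      by_cases h : H k ω = H i ω <;> simp [hf, hg, h] <;> ring
    have hTm : (Sum.inr k : Fin d ⊕ Fin d) ∉
        ({Sum.inl k, Sum.inl i, Sum.inl l, Sum.inr l} : Finset (Fin d ⊕ Fin d)) := by
      simp [hkl]
    have hST : Disjoint ({Sum.inr k} : Finset (Fin d ⊕ Fin d))
        {Sum.inl k, Sum.inl i, Sum.inl l, Sum.inr l} := by
      simp [Finset.disjoint_left, hkl]
    have hbase := hindep.indepFun_finset {Sum.inr k}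
      {Sum.inl k, Sum.inl i, Sum.inl l, Sum.inr l} hST hFam_meas
    -- compose with measurable maps to get IndepFun (s k) g
    have hjk : (Sum.inl k : Fin d ⊕ Fin d) ∈
        ({Sum.inl k, Sum.inl i, Sum.inl l, Sum.inr l} : Finset (Fin d ⊕ Fin d)) := by simp
    have hji : (Sum.inl i : Fin d ⊕ Fin d) ∈
        ({Sum.inl k, Sum.inl i, Sum.inl l, Sum.inr l} : Finset (Fin d ⊕ Fin d)) := by simp
    have hjl : (Sum.inl l : Fin d ⊕ Fin d) ∈
        ({Sum.inl k, Sum.inl i, Sum.inl l, Sum.inr l} : Finset (Fin d ⊕ Fin d)) := by simp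
    have hjrl : (Sum.inr l : Fin d ⊕ Fin d) ∈
        ({Sum.inl k, Sum.inl i, Sum.inl l, Sum.inr l} : Finset (Fin d ⊕ Fin d)) := by simp
    set T := ({Sum.inl k, Sum.inl i, Sum.inl l, Sum.inr l} : Finset (Fin d ⊕ Fin d)) with hT
    have hmem : (Sum.inr k : Fin d ⊕ Fin d) ∈ ({Sum.inr k} : Finset (Fin d ⊕ Fin d)) := by simp
    have hφm : Measurable (hsGetR (w := w) (T := ({Sum.inr k} : Finset (Fin d ⊕ Fin d))) k hmem) :=
      (measurable_pi_apply (⟨Sum.inr k, hmem⟩ : ({Sum.inr k} : Finset (Fin d ⊕ Fin d))) :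
        Measurable (hsGetR (w := w) (T := ({Sum.inr k} : Finset (Fin d ⊕ Fin d))) k hmem))
    have hWk : Measurable (hsGetW (w := w) (T := T) k hjk) :=
      (measurable_pi_apply (⟨Sum.inl k, hjk⟩ : T) :
        Measurable (hsGetW (w := w) (T := T) k hjk))
    have hWi : Measurable (hsGetW (w := w) (T := T) i hji) :=
      (measurable_pi_apply (⟨Sum.inl i, hji⟩ : T) :
        Measurable (hsGetW (w := w) (T := T) i hji))
    have hWl : Measurable (hsGetW (w := w) (T := T) l hjl) :=
      (measurable_pi_apply (⟨Sum.inl l, hjl⟩ : T) :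
        Measurable (hsGetW (w := w) (T := T) l hjl))
    have hRl : Measurable (hsGetR (w := w) (T := T) l hjrl) :=
      (measurable_pi_apply (⟨Sum.inr l, hjrl⟩ : T) :
        Measurable (hsGetR (w := w) (T := T) l hjrl))
    have hψm : Measurable (fun v => (if hsGetW (w := w) (T := T) k hjk v = hsGetW (w := w) (T := T) i hji v
        then x k else 0) *
        (if hsGetW (w := w) (T := T) l hjl v = hsGetW (w := w) (T := T) i hji v
          then hsGetR (w := w) (T := T) l hjrl v * x l else 0)) := by
      apply Measurable.mul
      · exact Measurable.ite (measurableSet_eq_fun hWk hWi)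
          measurable_const measurable_const
      · exact Measurable.ite (measurableSet_eq_fun hWl hWi)
          (hRl.mul_const _) measurable_const
    have hIF : IndepFun (s k) g P := by
      exact hbase.comp hφm hψm
    have hmul : ∫ ω, s k ω * g ω ∂P = (∫ ω, s k ω ∂P) * ∫ ω, g ω ∂P :=
      hIF.integral_fun_mul_eq_mul_integral (hsmeas k).aestronglyMeasurable hgmeas.aestronglyMeasurable
    rw [integral_congr_ae (Filter.Eventually.of_forall hpt), hmul, hEs k, zero_mul]
  -- the second moment of Z
  have hprod_int : ∀ k l : Fin d, Integrable (fun ω => f k ω * f l ω) P := by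
    intro k l
    apply hint _ (|x k| * |x l|) ((hfmeas k).mul (hfmeas l))
    intro ω
    rw [Pi.mul_apply, abs_mul]
    exact mul_le_mul (hfb k ω) (hfb l ω) (abs_nonneg _) (abs_nonneg _)
  have hZsq : ∫ ω, Z ω ^ 2 ∂P = ∑ k ∈ Finset.univ.erase i, x k ^ 2 / w := by
    have hpt : ∀ ω, Z ω ^ 2 = ∑ k ∈ Finset.univ.erase i,
        ∑ l ∈ Finset.univ.erase i, f k ω * f l ω := by
      intro ω; rw [sq, hZ]; exact Finset.sum_mul_sum _ _ _ _
    rw [integral_congr_ae (Filter.Eventually.of_forall hpt)]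
    rw [integral_finset_sum _ (fun k _ => integrable_finset_sum _ (fun l _ => hprod_int k l))]
    refine Finset.sum_congr rfl (fun k hk => ?_)
    rw [integral_finset_sum _ (fun l _ => hprod_int k l)]
    have hki : k ≠ i := Finset.ne_of_mem_erase hk
    rw [Finset.sum_eq_single_of_mem k hk]
    · exact hdiag k hki
    · intro l hl hlk
      exact hoff k l hki (Finset.ne_of_mem_erase hl) (Ne.symm hlk)
  have hZsq_le : ∫ ω, Z ω ^ 2 ∂P ≤ S / w := by
    rw [hZsq]
    have h1 : ∑ k ∈ Finset.univ.erase i, x k ^ 2 / w ≤ ∑ k, x k ^ 2 / w :=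
      Finset.sum_le_sum_of_subset_of_nonneg (Finset.erase_subset _ _)
        (fun j _ _ => by positivity)
    have h2 : ∑ k : Fin d, x k ^ 2 / (w : ℝ) = S / w := by
      rw [hS, Finset.sum_div]
    exact h1.trans_eq h2
  -- pointwise: |est i ω - x i| = |Z ω|
  have hestZ : ∀ ω, |est i ω - x i| = |Z ω| := by
    intro ω
    have hi_mem : i ∈ Finset.univ.filter (fun k => H k ω = H i ω) := by simp
    have hsum : ∑ k ∈ Finset.univ.filter (fun k => H k ω = H i ω), s k ω * x k
        = s i ω * x i + Z ω := by
      rw [← Finset.add_sum_erase _ _ hi_mem]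
      congr 1
      rw [hZ]
      have : (Finset.univ.filter (fun k => H k ω = H i ω)).erase i
          = (Finset.univ.erase i).filter (fun k => H k ω = H i ω) := by
        ext j; simp [and_comm]
      rw [this, Finset.sum_filter]
    rw [hest, hsum]
    have : s i ω * (s i ω * x i + Z ω) - x i = s i ω * Z ω := by
      linear_combination (x i) * hssq i ω
    rw [this, abs_mul, hs1, one_mul]
  -- Markov / Chebyshev step
  set t : ℝ := ε₁ * Real.sqrt S with ht
  have htpos : 0 < t := mul_pos hε₁ (Real.sqrt_pos.mpr hSpos)
  have hsetEq : {ω | t ≤ |est i ω - x i|}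
      = {ω | ENNReal.ofReal (t ^ 2) ≤ ENNReal.ofReal (Z ω ^ 2)} := by
    ext ω
    simp only [Set.mem_setOf_eq, hestZ ω]
    rw [ENNReal.ofReal_le_ofReal_iff (sq_nonneg _), ← sq_abs (Z ω)]
    exact (pow_le_pow_iff_left₀ htpos.le (abs_nonneg _) two_ne_zero).symm
  have hZsq_int : Integrable (fun ω => Z ω ^ 2) P := by
    set B : ℝ := ∑ k, |x k| with hB
    apply hint _ (B ^ 2) (hZmeas.pow_const 2)
    intro ω
    have hZab : |Z ω| ≤ B := by
      calc |Z ω| ≤ ∑ k ∈ Finset.univ.erase i, |f k ω| := Finset.abs_sum_le_sum_abs _ _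
        _ ≤ ∑ k ∈ Finset.univ.erase i, |x k| :=
            Finset.sum_le_sum (fun k _ => hfb k ω)
        _ ≤ B := Finset.sum_le_sum_of_subset_of_nonneg (Finset.erase_subset _ _)
            (fun j _ _ => abs_nonneg _)
    show |Z ω ^ 2| ≤ B ^ 2
    rw [abs_pow]
    exact pow_le_pow_left₀ (abs_nonneg _) hZab 2
  have hlint : ∫⁻ ω, ENNReal.ofReal (Z ω ^ 2) ∂P = ENNReal.ofReal (∫ ω, Z ω ^ 2 ∂P) :=
    (ofReal_integral_eq_lintegral_ofReal hZsq_int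
      (Filter.Eventually.of_forall (fun ω => sq_nonneg _))).symm
  have hmark := meas_ge_le_lintegral_div
    (μ := P) (f := fun ω => ENNReal.ofReal (Z ω ^ 2))
    ((hZmeas.pow_const 2).ennreal_ofReal.aemeasurable)
    (ε := ENNReal.ofReal (t ^ 2))
    ((ENNReal.ofReal_pos.mpr (by positivity)).ne')
    ENNReal.ofReal_ne_top
  rw [hsetEq]
  refine le_trans hmark ?_
  rw [hlint, ← ENNReal.ofReal_div_of_pos (by positivity)]
  apply ENNReal.ofReal_le_ofReal
  have ht2 : t ^ 2 = ε₁ ^ 2 * S := by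
    rw [ht, mul_pow, Real.sq_sqrt hSpos.le]
  rw [ht2]
  calc (∫ ω, Z ω ^ 2 ∂P) / (ε₁ ^ 2 * S) ≤ (S / w) / (ε₁ ^ 2 * S) := by
        gcongr
    _ = 1 / (ε₁ ^ 2 * w) := by field_simp
end
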